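/- Let α > −1 and n ∈ ℕ with n ≥ 3, and suppose L_n^{(α+4)} and L_n^{(α)} have no common zeros. Let 0 < x_1 < ⋯ < x_n be the zeros of L_n^{(α)} and 0 < w_1 < ⋯ < w_n the zeros of L_n^{(α+4)}. Let p_3(x) = (x + α + 3)(x + α + 2)(x + α + 1) − x(x + α + 1)(α + n + 3) − x(x + α + 3)(α + n + 2). If, over ℂ, p_3 has one real zero l_1 with l_1 < w_1 and its remaining two zeros are each either negative real numbers or have nonzero imaginary part, then the zeros of L_n^{(α+4)} and L_n^{(α)} interlace: x_1 < w_1 < x_2 < w_2 < ⋯ < x_n < w_n. -/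

import Mathlib

open Polynomial Finset
set_option maxHeartbeats 1000000

/-- The generalized Laguerre polynomial `L_n^{(α)}(x) =
∑_{k=0}^{n} (−1)^k [∏_{j=k+1}^{n}(α+j)] / ((n−k)!·k!) · x^k`. -/
noncomputable def laguerre (α : ℝ) (n : ℕ) : Polynomial ℝ :=
  ∑ k ∈ Finset.range (n + 1),
    Polynomial.C ((-1 : ℝ) ^ k * (∏ j ∈ Finset.Icc (k + 1) n, (α + (j : ℝ))) /
      ((n - k).factorial * k.factorial)) * Polynomial.X ^ k

noncomputable def lc (α : ℝ) (n k : ℕ) : ℝ :=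
  (-1 : ℝ) ^ k * (∏ j ∈ Finset.Icc (k + 1) n, (α + (j : ℝ))) /
      ((n - k).factorial * k.factorial)

lemma laguerre_coeff (α : ℝ) (n k : ℕ) :
    (laguerre α n).coeff k = if k ≤ n then lc α n k else 0 := by
  rw [laguerre, finset_sum_coeff]
  simp only [coeff_C_mul, coeff_X_pow, mul_ite, mul_one, mul_zero]
  rw [Finset.sum_ite_eq (Finset.range (n+1)) k]
  simp [Nat.lt_succ_iff, lc]

lemma laguerre_natDegree (α : ℝ) (n : ℕ) : (laguerre α n).natDegree ≤ n := by
  apply Polynomial.natDegree_le_iff_coeff_eq_zero.mpr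
  intro k hk
  rw [laguerre_coeff]
  simp only [Nat.not_le.mpr hk, if_false]

lemma laguerre_coeff_top (α : ℝ) (n : ℕ) :
    (laguerre α n).coeff n = (-1 : ℝ)^n / n.factorial := by
  rw [laguerre_coeff]
  simp [lc]

lemma prod_shift (a b : ℕ) (f : ℕ → ℝ) :
    ∏ j ∈ Icc (a+1) (b+1), f j = ∏ j ∈ Icc a b, f (j+1) := by
  rw [← Finset.map_add_right_Icc a b 1, Finset.prod_map]
  rfl

lemma prod_peel_bot (a b : ℕ) (h : a ≤ b) (f : ℕ → ℝ) :
    ∏ j ∈ Icc a b, f j = f a * ∏ j ∈ Icc (a+1) b, f j := by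
  rw [← Finset.Ico_add_one_right_eq_Icc, Finset.prod_eq_prod_Ico_succ_bot (by omega), Finset.Ico_add_one_right_eq_Icc]

lemma fact_ne (m : ℕ) : ((m.factorial : ℝ)) ≠ 0 := by
  exact_mod_cast m.factorial_ne_zero

lemma I1 (α : ℝ) (n : ℕ) :
    laguerre α (n+1) = laguerre (α+1) (n+1) - laguerre (α+1) n := by
  ext k
  simp only [coeff_sub, laguerre_coeff]
  rcases Nat.lt_or_ge n k with hk | hk
  · rcases Nat.lt_or_ge (n+1) k with hk2 | hk2
    · rw [if_neg (by omega), if_neg (by omega), if_neg (by omega)]; ring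
    · have hkn : k = n + 1 := by omega
      subst hkn
      rw [if_pos le_rfl, if_pos le_rfl, if_neg (by omega)]
      simp [lc, Finset.Icc_eq_empty_of_lt (by omega : n+1 < n+2)]
  · obtain ⟨m, rfl⟩ := Nat.exists_eq_add_of_le hk
    rw [if_pos (by omega), if_pos (by omega), if_pos (by omega)]
    unfold lc
    rw [prod_peel_bot (k+1) (k+m+1) (by omega),
        show k+1+1 = (k+1)+1 from rfl, show k+m+1 = (k+m)+1 from rfl,
        prod_shift (k+1) (k+m),
        Finset.prod_Icc_succ_top (by omega : k+1 ≤ (k+m)+1) (fun j => α+1+(j:ℝ))]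
    have e1 : ∀ j : ℕ, α + ((j:ℕ)+1 : ℕ) = α + 1 + (j:ℝ) := by intro j; push_cast; ring
    rw [Finset.prod_congr rfl (fun j _ => e1 j)]
    rw [show k+m+1-k = m+1 from by omega, show k+m-k = m from by omega,
        Nat.factorial_succ]
    field_simp
    push_cast
    ring

lemma I3 (β : ℝ) (n : ℕ) :
    X * derivative (laguerre β (n+1)) =
      C ((n:ℝ)+1) * laguerre β (n+1) - C ((n:ℝ)+1+β) * laguerre β n := by
  ext k
  rcases k with _ | k
  · simp only [coeff_sub, coeff_C_mul, laguerre_coeff, Nat.zero_le, if_pos, mul_comm X _,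
      coeff_mul_X_zero]
    unfold lc
    rw [Finset.prod_Icc_succ_top (by omega : 1 ≤ n+1) (fun j => β+(j:ℝ))]
    simp only [Nat.sub_zero, Nat.factorial_succ]
    field_simp
    push_cast
    ring
  · rw [coeff_X_mul, coeff_derivative, coeff_sub, coeff_C_mul, coeff_C_mul,
      laguerre_coeff, laguerre_coeff]
    rcases Nat.lt_or_ge n (k+1) with hk | hk
    · rcases Nat.lt_or_ge (n+1) (k+1) with hk2 | hk2
      · rw [if_neg (by omega), if_neg (by omega)]; ring
      · have hkn : k = n := by omega
        subst hkn
        rw [if_pos le_rfl, if_neg (by omega)]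
        ring
    · obtain ⟨m, rfl⟩ := Nat.exists_eq_add_of_le hk
      rw [if_pos (by omega), if_pos (by omega)]
      unfold lc
      rw [show k+1+m+1 = (k+1+m)+1 from rfl,
        Finset.prod_Icc_succ_top (by omega : k+1+1 ≤ (k+1+m)+1) (fun j => β+(j:ℝ))]
      rw [show k+1+m+1-(k+1) = m+1 from by omega, show k+1+m-(k+1) = m from by omega,
        Nat.factorial_succ]
      field_simp
      push_cast
      ring

lemma I2 (β : ℝ) (m : ℕ) :
    C ((m:ℝ)+2) * laguerre β (m+2) =
      (C (2*(m:ℝ)+3+β) - X) * laguerre β (m+1) - C ((m:ℝ)+1+β) * laguerre β m := by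
  ext k
  have hX : ((C (2*(m:ℝ)+3+β) - X) * laguerre β (m+1)).coeff k
      = (2*(m:ℝ)+3+β) * (laguerre β (m+1)).coeff k - (X * laguerre β (m+1)).coeff k := by
    rw [sub_mul, coeff_sub, coeff_C_mul]
  rw [coeff_sub, coeff_C_mul, coeff_C_mul, hX]
  rcases k with _ | k
  · have h0 : (X * laguerre β (m+1)).coeff 0 = (0:ℝ) := by simp
    rw [h0]
    simp only [laguerre_coeff, Nat.zero_le, if_pos]
    unfold lc
    rw [Finset.prod_Icc_succ_top (by omega : 1 ≤ m+1+1) (fun j => β+(j:ℝ)),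
        Finset.prod_Icc_succ_top (by omega : 1 ≤ m+1) (fun j => β+(j:ℝ))]
    simp only [Nat.sub_zero, Nat.factorial_succ]
    field_simp
    push_cast
    ring
  · rw [coeff_X_mul]
    simp only [laguerre_coeff]
    by_cases h1 : m + 1 < k
    · rw [if_neg (by omega), if_neg (by omega), if_neg (by omega), if_neg (by omega)]
      ring
    · by_cases h2 : k = m + 1
      · subst h2
        rw [if_pos (by omega), if_neg (by omega), if_pos (by omega), if_neg (by omega)]
        unfold lc
        rw [Finset.Icc_eq_empty_of_lt (by omega : m+2 < m+1+1+1),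
            Finset.Icc_eq_empty_of_lt (by omega : m+1 < m+1+1),
            show m+2-(m+1+1) = 0 from by omega, show m+1-(m+1) = 0 from by omega,
            Nat.factorial_succ (m+1)]
        simp only [Finset.prod_empty, Nat.factorial_zero]
        field_simp
        push_cast
        ring
      · by_cases h3 : k = m
        · subst h3
          rw [if_pos (by omega), if_pos (by omega), if_pos (by omega), if_neg (by omega)]
          unfold lc
          rw [show k+2-(k+1) = 1 from by omega, show k+1-(k+1) = 0 from by omega,
              show k+1-k = 1 from by omega,
              Finset.Icc_eq_empty_of_lt (by omega : k+1 < k+1+1),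
              show Finset.Icc (k+1+1) (k+2) = {k+2} from by
                rw [show k+1+1 = k+2 from rfl, Finset.Icc_self],
              show Finset.Icc (k+1) (k+1) = {k+1} from Finset.Icc_self _,
              Finset.prod_singleton, Finset.prod_singleton,
              Nat.factorial_succ k]
          simp only [Finset.prod_empty, Nat.factorial_zero, Nat.factorial_one]
          field_simp
          push_cast
          ring
        · have hk : k < m := by omega
          obtain ⟨t, rfl⟩ := Nat.exists_eq_add_of_lt hk
          rw [if_pos (by omega), if_pos (by omega), if_pos (by omega), if_pos (by omega)]
          unfold lc
          rw [prod_peel_bot (k+1) (k+t+1+1) (by omega) (fun j => β+(j:ℝ)),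
              show k+t+1+2 = (k+t+2)+1 from by omega, show k+t+1+1 = (k+t+1)+1 from by omega,
              Finset.prod_Icc_succ_top (by omega : k+1+1 ≤ (k+t+2)+1) (fun j => β+(j:ℝ)),
              Finset.prod_Icc_succ_top (by omega : k+1+1 ≤ (k+t+1)+1) (fun j => β+(j:ℝ)),
              show (k+t+2)+1 = k+t+3 from by omega,
              show k+t+1+2-(k+1) = t+2 from by omega,
              show k+t+1+1-(k+1) = t+1 from by omega,
              show k+t+1+1-k = t+2 from by omega,
              show k+t+1-(k+1) = t from by omega,
              show t+2 = (t+1)+1 from rfl, Nat.factorial_succ ((t+1)),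
              Nat.factorial_succ t, Nat.factorial_succ k]
          set P := ∏ j ∈ Finset.Icc (k+1+1) (k+t+1), (β+(j:ℝ)) with hP
          push_cast
          have h1 : ((t.factorial : ℝ)) ≠ 0 := fact_ne t
          have h2 : ((k.factorial : ℝ)) ≠ 0 := fact_ne k
          field_simp
          ring

lemma laguerre_zero (γ : ℝ) : laguerre γ 0 = 1 := by
  simp [laguerre]

lemma laguerre_one (γ : ℝ) : laguerre γ 1 = C (γ+1) - X := by
  rw [laguerre]
  rw [Finset.sum_range_succ, Finset.sum_range_one]
  norm_num [Finset.Icc_self]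
  ring

lemma star (α : ℝ) (n : ℕ) (hn : 3 ≤ n) :
    (C (n:ℝ) + C α + 1) * (C (n:ℝ) + C α + 2) * (C (n:ℝ) + C α + 3) * laguerre α n =
      ((C α+1)*(C α+2)*(C α+3) - 2*C (n:ℝ)*(C α+2)*X - C (n:ℝ)*X^2) * laguerre (α+4) n
      - ((X + C α + 3)*(X + C α + 2)*(X + C α + 1)
          - X*(X + C α + 1)*(C α + C (n:ℝ) + 3)
          - X*(X + C α + 3)*(C α + C (n:ℝ) + 2)) * laguerre (α+4) (n-1) := by
  obtain ⟨m, rfl⟩ : ∃ m, n = m + 3 := ⟨n - 3, by omega⟩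
  have e2 : α + 1 + 1 = α + 2 := by ring
  have e3 : α + 2 + 1 = α + 3 := by ring
  have e4 : α + 3 + 1 = α + 4 := by ring
  rw [show m + 3 - 1 = m + 2 from by omega]
  rcases m with _ | m
  · -- n = 3
    have hA0 := I1 α 2
    have hA1a := I1 (α+1) 2
    have hA1b := I1 (α+1) 1
    have hA2a := I1 (α+2) 2
    have hA2b := I1 (α+2) 1
    have hA2c := I1 (α+2) 0
    have hA3a := I1 (α+3) 2
    have hA3b := I1 (α+3) 1
    have hA3c := I1 (α+3) 0
    rw [e2] at hA1a hA1b
    rw [e3] at hA2a hA2b hA2c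
    rw [e4] at hA3a hA3b hA3c
    have hz : laguerre (α+3) 0 = laguerre (α+4) 0 := by
      rw [laguerre_zero, laguerre_zero]
    have hE : laguerre α 3 = laguerre (α+4) 3 - 4*laguerre (α+4) 2
        + 6*laguerre (α+4) 1 - 4*laguerre (α+4) 0 := by
      linear_combination hA0 + hA1a - hA1b + hA2a - 2*hA2b + hA2c
        + hA3a - 3*hA3b + 3*hA3c - hz
    have h2a := I2 (α+4) 1
    have h2b := I2 (α+4) 0
    have h2c : laguerre (α+4) 1 = (C α + 4 + 1 - X) * laguerre (α+4) 0 := by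
      rw [laguerre_one, laguerre_zero, show α+4+1 = α+5 from by ring]
      simp only [map_add, map_ofNat]
      ring
    norm_num at h2a h2b ⊢
    simp only [map_add, map_mul, map_sub, map_ofNat, map_one,
      Nat.cast_ofNat, Nat.cast_one, Nat.cast_zero] at h2a h2b ⊢
    linear_combination
      ((C α+4)*(C α+5)*(C α+6)) * hE
      + (6*(C α+4)*(C α+5) + (-(3*C α)-11-X)*(C α+7-X) - (C α+5)) * h2a
      + ((C α+6) * (-(3*C α)-11-X)) * h2b
      + ((C α+5)*(C α+6)) * h2c
  · -- n = m + 4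
    have hA0 := I1 α (m+3)
    have hA1a := I1 (α+1) (m+3)
    have hA1b := I1 (α+1) (m+2)
    have hA2a := I1 (α+2) (m+3)
    have hA2b := I1 (α+2) (m+2)
    have hA2c := I1 (α+2) (m+1)
    have hA3a := I1 (α+3) (m+3)
    have hA3b := I1 (α+3) (m+2)
    have hA3c := I1 (α+3) (m+1)
    have hA3d := I1 (α+3) m
    rw [e2] at hA1a hA1b
    rw [e3] at hA2a hA2b hA2c
    rw [e4] at hA3a hA3b hA3c hA3d
    norm_num at hA0 hA1a hA1b hA2a hA2b hA2c hA3a hA3b hA3c hA3d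
    have hE : laguerre α (m+4) = laguerre (α+4) (m+4) - 4*laguerre (α+4) (m+3)
        + 6*laguerre (α+4) (m+2) - 4*laguerre (α+4) (m+1) + laguerre (α+4) m := by
      linear_combination hA0 + hA1a - hA1b + hA2a - 2*hA2b + hA2c
        + hA3a - 3*hA3b + 3*hA3c - hA3d
    have h2a := I2 (α+4) (m+2)
    have h2b := I2 (α+4) (m+1)
    have h2c := I2 (α+4) m
    norm_num at h2a h2b h2c
    push_cast at h2a h2b h2c ⊢
    simp only [map_add, map_mul, map_sub, map_ofNat, map_one,
      Polynomial.C_eq_natCast] at h2a h2b h2c ⊢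
    linear_combination
      ((C α+(m:Polynomial ℝ)+5)*(C α+(m:Polynomial ℝ)+6)*(C α+(m:Polynomial ℝ)+7)) * hE
      + (6*(C α+(m:Polynomial ℝ)+5)*(C α+(m:Polynomial ℝ)+6)
          + (-(2*(m:Polynomial ℝ))-3*C α-13-X)*(2*(m:Polynomial ℝ)+9+C α-X)
          - (C α+(m:Polynomial ℝ)+6)*((m:Polynomial ℝ)+2)) * h2a
      + ((C α+(m:Polynomial ℝ)+7) * (-(2*(m:Polynomial ℝ))-3*C α-13-X)) * h2b
      + ((C α+(m:Polynomial ℝ)+6)*(C α+(m:Polynomial ℝ)+7)) * h2c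

lemma laguerre_ne_zero (β : ℝ) (n : ℕ) : laguerre β n ≠ 0 := by
  intro h
  have h2 : (laguerre β n).coeff n = (-1:ℝ)^n / n.factorial := by
    rw [laguerre_coeff]; simp [lc]
  rw [h] at h2
  simp only [coeff_zero] at h2
  have := fact_ne n
  have h3 : ((-1:ℝ)^n) ≠ 0 := pow_ne_zero _ (by norm_num)
  exact h3 (by field_simp at h2; linarith)

lemma laguerre_factor (β : ℝ) (n : ℕ) (hn : 1 ≤ n) (r : ℕ → ℝ)
    (hmono : ∀ i ∈ Finset.Icc 1 n, ∀ j ∈ Finset.Icc 1 n, i < j → r i < r j)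
    (hroots : ∀ t, (laguerre β n).eval t = 0 ↔ ∃ i ∈ Finset.Icc 1 n, r i = t) :
    laguerre β n = C ((-1:ℝ)^n / n.factorial) * ∏ i ∈ Finset.Icc 1 n, (X - C (r i)) := by
  classical
  have hP0 : laguerre β n ≠ 0 := laguerre_ne_zero β n
  have hc : (laguerre β n).coeff n ≠ 0 := by
    rw [laguerre_coeff]; simp only [le_refl, if_pos]
    unfold lc
    simp only [Finset.Icc_eq_empty_of_lt (by omega : n < n+1), Finset.prod_empty,
      Nat.sub_self, Nat.factorial_zero]
    have := fact_ne n
    have h3 : ((-1:ℝ)^n) ≠ 0 := pow_ne_zero _ (by norm_num)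
    intro hcon
    rw [_root_.div_eq_zero_iff] at hcon
    rcases hcon with h | h
    · simp at h
    · rw [mul_eq_zero] at h
      rcases h with h | h
      · norm_num at h
      · exact this h
  have hdeg : (laguerre β n).natDegree = n :=
    le_antisymm (laguerre_natDegree β n) (le_natDegree_of_ne_zero hc)
  set M : Multiset ℝ := (Finset.Icc 1 n).val.map r with hMdef
  have hinj : ∀ i ∈ Finset.Icc 1 n, ∀ j ∈ Finset.Icc 1 n, r i = r j → i = j := by
    intro i hi j hj hij
    rcases lt_trichotomy i j with h | h | h
    · exact absurd hij (ne_of_lt (hmono i hi j hj h))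
    · exact h
    · exact absurd hij.symm (ne_of_lt (hmono j hj i hi h))
  have hnd : M.Nodup := Multiset.Nodup.map_on
    (fun i hi j hj h => hinj i hi j hj h) (Finset.Icc 1 n).nodup
  have hMle : M ≤ (laguerre β n).roots := by
    refine Multiset.le_iff_count.2 fun a => ?_
    rcases Nat.eq_zero_or_pos (M.count a) with h0 | hpos
    · simp [h0]
    · have ha : a ∈ M := Multiset.count_pos.mp hpos
      have h1 : M.count a ≤ 1 := Multiset.nodup_iff_count_le_one.mp hnd a
      have haroot : (laguerre β n).IsRoot a := by
        obtain ⟨i, hi, hri⟩ := Multiset.mem_map.mp ha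
        exact (hroots a).mpr ⟨i, hi, hri⟩
      have : 1 ≤ (laguerre β n).roots.count a := by
        rw [count_roots]
        exact (rootMultiplicity_pos hP0).mpr haroot
      omega
  have hMcard : Multiset.card M = n := by
    rw [hMdef, Multiset.card_map]
    have := Nat.card_Icc 1 n
    simpa using (by rw [← Finset.card_def]; simp [Nat.card_Icc] : Multiset.card (Finset.Icc 1 n).val = n)
  have hM : M = (laguerre β n).roots := by
    refine Multiset.eq_of_le_of_card_le hMle ?_
    rw [hMcard]
    simpa [hdeg] using (laguerre β n).card_roots' 
  have hfact := C_leadingCoeff_mul_prod_multiset_X_sub_C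
    (p := laguerre β n) (by rw [← hM, hMcard, hdeg])
  have hlc : (laguerre β n).leadingCoeff = (-1:ℝ)^n / n.factorial := by
    rw [Polynomial.leadingCoeff, hdeg, laguerre_coeff]
    simp [lc]
  rw [← hfact, hlc, ← hM, hMdef, Multiset.map_map]
  congr 1

lemma eval_deriv_prod (s : Finset ℕ) (f : ℕ → ℝ) (k : ℕ) (hk : k ∈ s) :
    eval (f k) (derivative (∏ i ∈ s, (X - C (f i)))) = ∏ i ∈ s.erase k, (f k - f i) := by
  classical
  rw [← Finset.mul_prod_erase s _ hk, derivative_mul]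
  have h1 : derivative (X - C (f k)) = 1 := by
    rw [derivative_sub, derivative_X, derivative_C, sub_zero]
  rw [h1]
  simp [eval_prod]

lemma prod_neg_pow (s : Finset ℕ) (f : ℕ → ℝ) :
    ∏ i ∈ s, f i = (-1:ℝ)^s.card * ∏ i ∈ s, (-f i) := by
  rw [← Finset.prod_const, ← Finset.prod_mul_distrib]
  exact Finset.prod_congr rfl (fun i hi => by ring)

lemma even_of_pow_pos {m : ℕ} (h : (0:ℝ) < (-1)^m) : Even m := by
  rcases Nat.even_or_odd m with he | ho
  · exact he
  · rw [ho.neg_one_pow] at h; norm_num at h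

lemma p3_pos (α : ℝ) (nr : ℝ) (l₁ l₂ l₃ : ℂ)
    (hid : ∀ z : ℂ,
        (z + (α : ℂ) + 3) * (z + (α : ℂ) + 2) * (z + (α : ℂ) + 1) -
            z * (z + (α : ℂ) + 1) * ((α : ℂ) + (nr : ℂ) + 3) -
            z * (z + (α : ℂ) + 3) * ((α : ℂ) + (nr : ℂ) + 2) =
          (z - l₁) * (z - l₂) * (z - l₃))
    (h1im : l₁.im = 0) (w1 : ℝ) (hw1pos : 0 < w1) (h1lt : l₁.re < w1)
    (h2 : (l₂.im = 0 ∧ l₂.re < 0) ∨ l₂.im ≠ 0)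
    (h3 : (l₃.im = 0 ∧ l₃.re < 0) ∨ l₃.im ≠ 0)
    (t : ℝ) (ht : w1 ≤ t) :
    0 < (t+α+3)*(t+α+2)*(t+α+1) - t*(t+α+1)*(α+nr+3) - t*(t+α+3)*(α+nr+2) := by
  set p : ℝ → ℝ := fun s => (s+α+3)*(s+α+2)*(s+α+1) - s*(s+α+1)*(α+nr+3) - s*(s+α+3)*(α+nr+2)
    with hp
  have key : ∀ s : ℝ, ((p s : ℝ) : ℂ) = ((s:ℂ) - l₁) * ((s:ℂ) - l₂) * ((s:ℂ) - l₃) := by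
    intro s
    have h := hid (s : ℂ)
    rw [← h, hp]
    push_cast
    ring
  have hl1 : l₁ = ((l₁.re : ℝ) : ℂ) := Complex.ext rfl (by simpa using h1im)
  -- Vieta : sum and pair products are real
  have k1 := key 1
  have km := key (-1)
  have k0 := key 0
  push_cast at k1 km k0
  have hu : l₁ + l₂ + l₃ = ((-(p 1 + p (-1))/2 + p 0 : ℝ) : ℂ) := by
    push_cast
    linear_combination ((1:ℂ)/2) * k1 + ((1:ℂ)/2) * km - k0
  have hv : l₁*(l₂+l₃) + l₂*l₃ = (((p 1 - p (-1))/2 - 1 : ℝ) : ℂ) := by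
    push_cast
    linear_combination (-(1:ℂ)/2) * k1 + ((1:ℂ)/2) * km
  have hu' := congrArg Complex.im hu
  simp only [Complex.add_im, Complex.ofReal_im, h1im, zero_add] at hu'
  have huim : l₂.im + l₃.im = 0 := by linarith
  have hv' := congrArg Complex.im hv
  simp only [Complex.add_im, Complex.mul_im, Complex.add_re, Complex.ofReal_im, h1im,
    zero_mul, mul_zero, add_zero, zero_add] at hv'
  have hvim : l₂.re * l₃.im + l₂.im * l₃.re = 0 := by
    linear_combination hv' - l₁.re * huim
  have ht1 : l₁.re < t := lt_of_lt_of_le h1lt ht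
  have ht0 : 0 < t := lt_of_lt_of_le hw1pos ht
  by_cases h2im : l₂.im = 0
  · -- all three real
    have h3im : l₃.im = 0 := by linarith [huim]
    have h2' : l₂.re < 0 := by
      rcases h2 with ⟨_, h⟩ | h
      · exact h
      · exact absurd h2im h
    have h3' : l₃.re < 0 := by
      rcases h3 with ⟨_, h⟩ | h
      · exact h
      · exact absurd h3im h
    have hl2 : l₂ = ((l₂.re : ℝ) : ℂ) := Complex.ext rfl (by simpa using h2im)
    have hl3 : l₃ = ((l₃.re : ℝ) : ℂ) := Complex.ext rfl (by simpa using h3im)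
    have hreal : p t = (t - l₁.re) * (t - l₂.re) * (t - l₃.re) := by
      have := key t
      rw [hl1, hl2, hl3] at this
      exact_mod_cast this
    rw [hp] at hreal
    rw [show (t+α+3)*(t+α+2)*(t+α+1) - t*(t+α+1)*(α+nr+3) - t*(t+α+3)*(α+nr+2)
        = (t - l₁.re) * (t - l₂.re) * (t - l₃.re) from hreal]
    have f1 : 0 < t - l₁.re := by linarith
    have f2 : 0 < t - l₂.re := by linarith
    have f3 : 0 < t - l₃.re := by linarith
    positivity
  · -- conjugate pair
    have h3im : l₃.im = -l₂.im := by linarith [huim]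
    have h3re : l₃.re = l₂.re := by
      rw [h3im] at hvim
      have : l₂.im * (l₃.re - l₂.re) = 0 := by linear_combination hvim
      rcases mul_eq_zero.mp this with h | h
      · exact absurd h h2im
      · linarith
    have hl2 : l₂ = ((l₂.re:ℝ):ℂ) + ((l₂.im:ℝ):ℂ) * Complex.I := by
      exact (Complex.re_add_im l₂).symm
    have hl3 : l₃ = ((l₂.re:ℝ):ℂ) - ((l₂.im:ℝ):ℂ) * Complex.I := by
      rw [← Complex.re_add_im l₃, h3re, h3im]
      push_cast
      ring
    have hreal : p t = (t - l₁.re) * ((t - l₂.re)^2 + l₂.im^2) := by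
      have hkt := key t
      rw [hl1, hl2, hl3] at hkt
      have : ((p t : ℝ) : ℂ) = (((t - l₁.re) * ((t - l₂.re)^2 + l₂.im^2) : ℝ) : ℂ) := by
        rw [hkt]
        push_cast
        linear_combination (((l₁.re:ℂ) - (t:ℂ)) * (l₂.im:ℂ)^2) * Complex.I_sq
      exact_mod_cast this
    rw [hp] at hreal
    rw [show (t+α+3)*(t+α+2)*(t+α+1) - t*(t+α+1)*(α+nr+3) - t*(t+α+3)*(α+nr+2)
        = (t - l₁.re) * ((t - l₂.re)^2 + l₂.im^2) from hreal]
    have f1 : 0 < t - l₁.re := by linarith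
    have f2 : 0 < (t - l₂.re)^2 + l₂.im^2 := by positivity
    positivity

lemma key_eval (α : ℝ) (n : ℕ) (hn : 3 ≤ n) (t : ℝ)
    (ht : (laguerre (α+4) n).eval t = 0) :
    ((n:ℝ)+α+4) * (((n:ℝ)+α+1)*((n:ℝ)+α+2)*((n:ℝ)+α+3)) * (laguerre α n).eval t
    = ((t+α+3)*(t+α+2)*(t+α+1) - t*(t+α+1)*(α+(n:ℝ)+3) - t*(t+α+3)*(α+(n:ℝ)+2))
        * (t * ((derivative (laguerre (α+4) n)).eval t)) := by
  obtain ⟨n₀, hn₀⟩ : ∃ n₀, n = n₀ + 1 := ⟨n - 1, by omega⟩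
  have hst := congrArg (eval t) (star α n hn)
  rw [show n - 1 = n₀ from by omega] at hst
  simp only [eval_mul, eval_add, eval_sub, eval_C, eval_X, eval_pow, eval_one,
    eval_ofNat, ht, mul_zero, zero_mul] at hst
  have hI := congrArg (eval t) (I3 (α+4) n₀)
  rw [← hn₀] at hI
  simp only [eval_mul, eval_add, eval_sub, eval_C, eval_X, ht, mul_zero, zero_mul] at hI
  have hc : (n₀:ℝ) + 1 = (n:ℝ) := by rw [hn₀]; push_cast; ring
  set p3v := (t+α+3)*(t+α+2)*(t+α+1) - t*(t+α+1)*(α+(n:ℝ)+3) - t*(t+α+3)*(α+(n:ℝ)+2)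
    with hp3v
  linear_combination ((n:ℝ)+α+4) * hst - p3v * hI
    + (p3v * (eval t (laguerre (α+4) n₀))) * hc

lemma even_parity_of_eq {a b : ℕ} {L R : ℝ} (hL : 0 < L) (hR : 0 < R)
    (h : (-1:ℝ)^a * L = (-1:ℝ)^b * R) : Even (a + b) := by
  rcases Nat.even_or_odd a with ha | ha <;> rcases Nat.even_or_odd b with hb | hb
  · exact ha.add hb
  · rw [ha.neg_one_pow, hb.neg_one_pow] at h; nlinarith
  · rw [ha.neg_one_pow, hb.neg_one_pow] at h; nlinarith
  · rw [Nat.even_add]; constructor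
    · intro h'; exact absurd h' (Nat.not_even_iff_odd.mpr ha)
    · intro h'; exact absurd h' (Nat.not_even_iff_odd.mpr hb)

theorem laguerre_interlacing_equal_deg_param_four
    (α : ℝ) (hα : -1 < α) (n : ℕ) (hn : 3 ≤ n)
    (hnc : ∀ t : ℝ, ¬((laguerre (α + 4) n).eval t = 0 ∧ (laguerre α n).eval t = 0))
    (x : ℕ → ℝ)
    (hxpos : ∀ i ∈ Finset.Icc 1 n, 0 < x i)
    (hxmono : ∀ i ∈ Finset.Icc 1 n, ∀ j ∈ Finset.Icc 1 n, i < j → x i < x j)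
    (hxroots : ∀ t : ℝ, (laguerre α n).eval t = 0 ↔ ∃ i ∈ Finset.Icc 1 n, x i = t)
    (w : ℕ → ℝ)
    (hwpos : ∀ i ∈ Finset.Icc 1 n, 0 < w i)
    (hwmono : ∀ i ∈ Finset.Icc 1 n, ∀ j ∈ Finset.Icc 1 n, i < j → w i < w j)
    (hwroots : ∀ t : ℝ, (laguerre (α + 4) n).eval t = 0 ↔ ∃ i ∈ Finset.Icc 1 n, w i = t)
    (hp3 : ∃ l₁ l₂ l₃ : ℂ,
      (∀ z : ℂ,
          (z + (α : ℂ) + 3) * (z + (α : ℂ) + 2) * (z + (α : ℂ) + 1) -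
              z * (z + (α : ℂ) + 1) * ((α : ℂ) + (n : ℂ) + 3) -
              z * (z + (α : ℂ) + 3) * ((α : ℂ) + (n : ℂ) + 2) =
            (z - l₁) * (z - l₂) * (z - l₃)) ∧
        l₁.im = 0 ∧ l₁.re < w 1 ∧
        ((l₂.im = 0 ∧ l₂.re < 0) ∨ l₂.im ≠ 0) ∧
        ((l₃.im = 0 ∧ l₃.re < 0) ∨ l₃.im ≠ 0)) :
    ∀ i ∈ Finset.Icc 1 n, x i < w i ∧ (i < n → w i < x (i + 1)) := by
  classical
  obtain ⟨l₁, l₂, l₃, hid, h1im, h1lt, h2, h3⟩ := hp3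
  have h1mem : (1:ℕ) ∈ Finset.Icc 1 n := Finset.mem_Icc.mpr ⟨le_refl 1, by omega⟩
  have hw1 : 0 < w 1 := hwpos 1 h1mem
  have hid' : ∀ z : ℂ,
      (z + (α : ℂ) + 3) * (z + (α : ℂ) + 2) * (z + (α : ℂ) + 1) -
          z * (z + (α : ℂ) + 1) * ((α : ℂ) + (((n:ℝ)) : ℂ) + 3) -
          z * (z + (α : ℂ) + 3) * ((α : ℂ) + (((n:ℝ)) : ℂ) + 2) =
        (z - l₁) * (z - l₂) * (z - l₃) := by
    intro z
    have h := hid z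
    push_cast at h ⊢
    exact h
  have hp3pos := p3_pos α ((n:ℝ)) l₁ l₂ l₃ hid' h1im (w 1) hw1 h1lt h2 h3
  have hPfac := laguerre_factor α n (by omega) x hxmono hxroots
  have hQfac := laguerre_factor (α+4) n (by omega) w hwmono hwroots
  set c : ℝ := (-1:ℝ)^n / n.factorial with hcdef
  have hc0 : c ≠ 0 := div_ne_zero (pow_ne_zero _ (by norm_num)) (fact_ne n)
  have hxw : ∀ k ∈ Finset.Icc 1 n, ∀ i ∈ Finset.Icc 1 n, x i ≠ w k := by
    intro k hk i hi he
    exact hnc (w k) ⟨(hwroots _).mpr ⟨k, hk, rfl⟩, (hxroots _).mpr ⟨i, hi, he⟩⟩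
  set N : ℕ → ℕ := fun k => ((Finset.Icc 1 n).filter (fun i => w k < x i)).card with hNdef
  -- cast facts
  have hn3 : (3:ℝ) ≤ (n:ℝ) := by exact_mod_cast hn
  have hb : 0 < (n:ℝ) + α + 4 := by linarith
  have hDv : 0 < ((n:ℝ)+α+1)*((n:ℝ)+α+2)*((n:ℝ)+α+3) := by
    have : 0 < (n:ℝ)+α+1 := by linarith
    have : 0 < (n:ℝ)+α+2 := by linarith
    have : 0 < (n:ℝ)+α+3 := by linarith
    positivity
  -- the parity fact
  have hpar : ∀ k ∈ Finset.Icc 1 n, Even (N k + (n - k)) := by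
    intro k hk
    have hk' := Finset.mem_Icc.mp hk
    have hwk0 : 0 < w k := hwpos k hk
    have hw1k : w 1 ≤ w k := by
      rcases Nat.eq_or_lt_of_le hk'.1 with h | h
      · rw [← h]
      · exact le_of_lt (hwmono 1 h1mem k hk h)
    have hQk : eval (w k) (laguerre (α+4) n) = 0 := (hwroots _).mpr ⟨k, hk, rfl⟩
    have hkey := key_eval α n hn (w k) hQk
    have hPe : eval (w k) (laguerre α n) = c * ∏ i ∈ Finset.Icc 1 n, (w k - x i) := by
      rw [hPfac]
      simp [eval_prod]
    have hQd : eval (w k) (derivative (laguerre (α+4) n))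
        = c * ∏ i ∈ (Finset.Icc 1 n).erase k, (w k - w i) := by
      rw [hQfac, derivative_C_mul, eval_mul, eval_C, eval_deriv_prod _ _ k hk]
    set S := (Finset.Icc 1 n).filter (fun i => w k < x i) with hSdef
    have hsplit : ∏ i ∈ Finset.Icc 1 n, (w k - x i)
        = (∏ i ∈ S, (w k - x i)) *
          ∏ i ∈ (Finset.Icc 1 n).filter (fun i => ¬ w k < x i), (w k - x i) :=
      (Finset.prod_filter_mul_prod_filter_not _ _ _).symm
    have hSneg : ∏ i ∈ S, (w k - x i) = (-1:ℝ)^S.card * ∏ i ∈ S, (x i - w k) := by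
      rw [prod_neg_pow]
      exact congrArg _ (Finset.prod_congr rfl fun i hi => by ring)
    have hPS : 0 < ∏ i ∈ S, (x i - w k) := by
      apply Finset.prod_pos
      intro i hi
      have := (Finset.mem_filter.mp hi).2
      linarith
    have hPA : 0 < ∏ i ∈ (Finset.Icc 1 n).filter (fun i => ¬ w k < x i), (w k - x i) := by
      apply Finset.prod_pos
      intro i hi
      obtain ⟨hi1, hi2⟩ := Finset.mem_filter.mp hi
      have hne := hxw k hk i hi1
      have : x i ≤ w k := not_lt.mp hi2
      rcases lt_or_eq_of_le this with h | h
      · linarith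
      · exact absurd h hne
    have herase : (Finset.Icc 1 n).erase k = Finset.Icc 1 (k-1) ∪ Finset.Icc (k+1) n := by
      ext j
      simp only [Finset.mem_erase, Finset.mem_Icc, Finset.mem_union]
      omega
    have hdisj : Disjoint (Finset.Icc 1 (k-1)) (Finset.Icc (k+1) n) := by
      rw [Finset.disjoint_left]
      intro j hj1 hj2
      rw [Finset.mem_Icc] at hj1 hj2
      omega
    have hwsplit : ∏ i ∈ (Finset.Icc 1 n).erase k, (w k - w i)
        = (∏ i ∈ Finset.Icc 1 (k-1), (w k - w i)) * ∏ i ∈ Finset.Icc (k+1) n, (w k - w i) := by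
      rw [herase, Finset.prod_union hdisj]
    have hQA : 0 < ∏ i ∈ Finset.Icc 1 (k-1), (w k - w i) := by
      apply Finset.prod_pos
      intro i hi
      rw [Finset.mem_Icc] at hi
      have : w i < w k := hwmono i (Finset.mem_Icc.mpr ⟨hi.1, by omega⟩) k hk (by omega)
      linarith
    have hBneg : ∏ i ∈ Finset.Icc (k+1) n, (w k - w i)
        = (-1:ℝ)^(n-k) * ∏ i ∈ Finset.Icc (k+1) n, (w i - w k) := by
      rw [prod_neg_pow, Nat.card_Icc, show n+1-(k+1) = n-k from by omega]
      exact congrArg _ (Finset.prod_congr rfl fun i hi => by ring)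
    have hQB : 0 < ∏ i ∈ Finset.Icc (k+1) n, (w i - w k) := by
      apply Finset.prod_pos
      intro i hi
      rw [Finset.mem_Icc] at hi
      have : w k < w i := hwmono k hk i (Finset.mem_Icc.mpr ⟨by omega, hi.2⟩) (by omega)
      linarith
    have hp3vk := hp3pos (w k) hw1k
    rw [hPe, hQd, hsplit, hSneg, hwsplit, hBneg] at hkey
    have hLR : (-1:ℝ)^S.card * (((n:ℝ)+α+4) * (((n:ℝ)+α+1)*((n:ℝ)+α+2)*((n:ℝ)+α+3))
          * ((∏ i ∈ S, (x i - w k)) *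
             ∏ i ∈ (Finset.Icc 1 n).filter (fun i => ¬ w k < x i), (w k - x i)))
        = (-1:ℝ)^(n-k) * (((w k+α+3)*(w k+α+2)*(w k+α+1)
              - w k*(w k+α+1)*(α+(n:ℝ)+3) - w k*(w k+α+3)*(α+(n:ℝ)+2))
            * (w k * ((∏ i ∈ Finset.Icc 1 (k-1), (w k - w i)) *
                ∏ i ∈ Finset.Icc (k+1) n, (w i - w k)))) := by
      apply mul_left_cancel₀ hc0
      linear_combination hkey
    refine even_parity_of_eq ?_ ?_ hLR
    · have h1 : 0 < (∏ i ∈ S, (x i - w k)) *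
          ∏ i ∈ (Finset.Icc 1 n).filter (fun i => ¬ w k < x i), (w k - x i) :=
        mul_pos hPS hPA
      positivity
    · have h1 : 0 < (∏ i ∈ Finset.Icc 1 (k-1), (w k - w i)) *
          ∏ i ∈ Finset.Icc (k+1) n, (w i - w k) := mul_pos hQA hQB
      have h2 : 0 < w k * ((∏ i ∈ Finset.Icc 1 (k-1), (w k - w i)) *
          ∏ i ∈ Finset.Icc (k+1) n, (w i - w k)) := mul_pos hwk0 h1
      exact mul_pos hp3vk h2
  -- N is strictly decreasing
  have hNmono : ∀ k, 1 ≤ k → k < n → N (k+1) < N k := by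
    intro k hk1 hkn
    have hkmem : k ∈ Finset.Icc 1 n := Finset.mem_Icc.mpr ⟨hk1, by omega⟩
    have hk1mem : k+1 ∈ Finset.Icc 1 n := Finset.mem_Icc.mpr ⟨by omega, by omega⟩
    have hsub : (Finset.Icc 1 n).filter (fun i => w (k+1) < x i)
        ⊆ (Finset.Icc 1 n).filter (fun i => w k < x i) := by
      intro j hj
      rw [Finset.mem_filter] at hj ⊢
      have hwkk : w k < w (k+1) := hwmono k hkmem (k+1) hk1mem (by omega)
      exact ⟨hj.1, by linarith [hj.2]⟩
    have hle : N (k+1) ≤ N k := Finset.card_le_card hsub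
    obtain ⟨a, ha⟩ := hpar k hkmem
    obtain ⟨b, hb⟩ := hpar (k+1) hk1mem
    omega
  -- lower bound
  have hlow : ∀ d k, k + d = n → 1 ≤ k → d ≤ N k := by
    intro d
    induction d with
    | zero => intro k _ _; exact Nat.zero_le _
    | succ e ih =>
        intro k hk hk1
        have h1 := ih (k+1) (by omega) (by omega)
        have h2 := hNmono k hk1 (by omega)
        omega
  -- upper bound
  have hNle : ∀ k ∈ Finset.Icc 1 n, N k ≤ n :=
    fun k _ => le_trans (Finset.card_le_card (Finset.filter_subset _ _)) (by
      rw [Nat.card_Icc]; omega)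
  have hhigh : ∀ k, 1 ≤ k → k ≤ n → N k + k ≤ n := by
    intro k
    induction k with
    | zero => omega
    | succ e ih =>
        intro _ hkn
        rcases Nat.eq_zero_or_pos e with he | he
        · subst he
          obtain ⟨a, ha⟩ := hpar 1 h1mem
          have h0 := hNle 1 h1mem
          show N 1 + 1 ≤ n
          omega
        · have h1 := ih (by omega) (by omega)
          have h2 := hNmono e (by omega) (by omega)
          omega
  have hNk : ∀ k ∈ Finset.Icc 1 n, N k = n - k := by
    intro k hk
    have hk' := Finset.mem_Icc.mp hk
    have h1 := hlow (n-k) k (by omega) hk'.1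
    have h2 := hhigh k hk'.1 hk'.2
    omega
  -- conclusion
  intro i hi
  have hi' := Finset.mem_Icc.mp hi
  have hNi := hNk i hi
  simp only [hNdef] at hNi
  constructor
  · by_contra hcon
    push_neg at hcon
    have hwx : w i < x i := by
      rcases lt_or_eq_of_le hcon with h | h
      · exact h
      · exact absurd h.symm (hxw i hi i hi)
    have hsub : Finset.Icc i n ⊆ (Finset.Icc 1 n).filter (fun j => w i < x j) := by
      intro j hj
      rw [Finset.mem_Icc] at hj
      rw [Finset.mem_filter, Finset.mem_Icc]
      refine ⟨⟨by omega, hj.2⟩, ?_⟩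
      rcases Nat.eq_or_lt_of_le hj.1 with h | h
      · rw [← h]; exact hwx
      · have := hxmono i hi j (Finset.mem_Icc.mpr ⟨by omega, hj.2⟩) h
        linarith
    have := Finset.card_le_card hsub
    rw [Nat.card_Icc] at this
    omega
  · intro hin
    by_contra hcon
    push_neg at hcon
    have hi1mem : i+1 ∈ Finset.Icc 1 n := Finset.mem_Icc.mpr ⟨by omega, by omega⟩
    have hwx : x (i+1) < w i := by
      rcases lt_or_eq_of_le hcon with h | h
      · exact h
      · exact absurd h (hxw i hi (i+1) hi1mem)
    have hsub : (Finset.Icc 1 n).filter (fun j => w i < x j) ⊆ Finset.Icc (i+2) n := by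
      intro j hj
      rw [Finset.mem_filter, Finset.mem_Icc] at hj
      rw [Finset.mem_Icc]
      refine ⟨?_, hj.1.2⟩
      by_contra hj2
      push_neg at hj2
      have hxji : x j ≤ x (i+1) := by
        rcases Nat.lt_or_ge j (i+1) with h | h
        · exact le_of_lt (hxmono j (Finset.mem_Icc.mpr hj.1) (i+1) hi1mem h)
        · have : j = i+1 := by omega
          rw [this]
      linarith [hj.2]
    have := Finset.card_le_card hsub
    rw [Nat.card_Icc] at this
    omega
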